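/- Let w : ℝ → ℝ be bounded and continuous, and let ρ(x) = sin(x) + w(x)·e^(−x). For h ≠ 0 and A ∈ ℝ define ι_{h,A}(x) = ρ(hx + 2πA)/h. Then for every compact L ⊆ ℝ and every ε > 0, there exist h ≠ 0 and A ∈ ℕ such that |ι_{h,A}(x) − x| ≤ ε for all x ∈ L. -/

import Mathlib

lemma sin_lin_aux (t : ℝ) (ht : |t| ≤ 1) : |Real.sin t - t| ≤ |t| ^ 3 := by
  have h := Real.sin_bound ht
  have h1 : |Real.sin t - t| ≤ |Real.sin t - (t - t ^ 3 / 6)| + |t ^ 3 / 6| := by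
    have he : Real.sin t - t = (Real.sin t - (t - t ^ 3 / 6)) + (-(t ^ 3 / 6)) := by ring
    rw [he]
    exact (abs_add_le _ _).trans (by rw [abs_neg])
  have h2 : |t ^ 3 / 6| = |t| ^ 3 / 6 := by rw [abs_div, abs_pow]; norm_num
  have h4 : |t| ^ 4 ≤ |t| ^ 3 := pow_le_pow_of_le_one (abs_nonneg t) ht (by norm_num)
  have h5 : (0:ℝ) ≤ |t| ^ 3 := pow_nonneg (abs_nonneg t) 3
  linarith [pow_le_pow_of_le_one (abs_nonneg t) ht (show 3 ≤ 5 by norm_num)]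

theorem stmt_7 (w : ℝ → ℝ) (hw_bdd : ∃ M : ℝ, ∀ x, |w x| ≤ M) (hw_cont : Continuous w)
    (ρ : ℝ → ℝ) (hρ : ∀ x, ρ x = Real.sin x + w x * Real.exp (-x))
    (L : Set ℝ) (hL : IsCompact L) :
    ∀ ε > 0, ∃ h : ℝ, h ≠ 0 ∧ ∃ A : ℕ, ∀ x ∈ L,
      |ρ (h * x + 2 * Real.pi * A) / h - x| ≤ ε := by
  intro ε hε
  obtain ⟨M, hM⟩ := hw_bdd
  obtain ⟨R, hR⟩ : ∃ R : ℝ, ∀ x ∈ L, |x| ≤ R := by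
    obtain ⟨r, hr⟩ := hL.isBounded.subset_closedBall 0
    exact ⟨r, fun x hx => by simpa [Real.dist_eq] using hr hx⟩
  obtain ⟨R', hR'pos, hxR'⟩ : ∃ R' : ℝ, 0 < R' ∧ ∀ x ∈ L, |x| ≤ R' := by
    refine ⟨max R 0 + 1, by positivity, fun x hx => ?_⟩
    have := hR x hx
    have := le_max_left R 0
    linarith
  obtain ⟨h, hhpos, hhR', hhsq⟩ :
      ∃ h : ℝ, 0 < h ∧ h * R' ≤ 1 ∧ h ^ 2 * R' ^ 3 ≤ ε / 2 := by
    refine ⟨min (1 / R') (Real.sqrt (ε / (2 * R' ^ 3))), lt_min (by positivity)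
      (Real.sqrt_pos.mpr (by positivity)), ?_, ?_⟩
    · have h1 : min (1 / R') (Real.sqrt (ε / (2 * R' ^ 3))) ≤ 1 / R' := min_le_left _ _
      calc min (1 / R') (Real.sqrt (ε / (2 * R' ^ 3))) * R' ≤ (1 / R') * R' :=
            mul_le_mul_of_nonneg_right h1 hR'pos.le
      _ = 1 := by field_simp
    · have h1 : min (1 / R') (Real.sqrt (ε / (2 * R' ^ 3))) ≤ Real.sqrt (ε / (2 * R' ^ 3)) :=
        min_le_right _ _
      have hnn : (0:ℝ) ≤ min (1 / R') (Real.sqrt (ε / (2 * R' ^ 3))) :=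
        le_min (by positivity) (Real.sqrt_nonneg _)
      have h2 : min (1 / R') (Real.sqrt (ε / (2 * R' ^ 3))) ^ 2 ≤ ε / (2 * R' ^ 3) := by
        calc min (1 / R') (Real.sqrt (ε / (2 * R' ^ 3))) ^ 2
            ≤ Real.sqrt (ε / (2 * R' ^ 3)) ^ 2 := pow_le_pow_left₀ hnn h1 2
        _ = ε / (2 * R' ^ 3) := Real.sq_sqrt (by positivity)
      calc min (1 / R') (Real.sqrt (ε / (2 * R' ^ 3))) ^ 2 * R' ^ 3
          ≤ (ε / (2 * R' ^ 3)) * R' ^ 3 := mul_le_mul_of_nonneg_right h2 (by positivity)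
      _ = ε / 2 := by field_simp
  obtain ⟨M', hM'pos, hMM'⟩ : ∃ M' : ℝ, 0 < M' ∧ ∀ x, |w x| ≤ M' := by
    refine ⟨max M 0 + 1, by positivity, fun x => ?_⟩
    have := hM x
    have := le_max_left M 0
    linarith
  obtain ⟨A, hA⟩ : ∃ A : ℕ, Real.exp (-(2 * Real.pi)) ^ A ≤ ε * h / (2 * M' * Real.exp 1) := by
    obtain ⟨A, hA⟩ := exists_pow_lt_of_lt_one
      (show (0:ℝ) < ε * h / (2 * M' * Real.exp 1) by positivity)
      (show Real.exp (-(2 * Real.pi)) < 1 by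
        rw [Real.exp_lt_one_iff]
        have := Real.pi_pos; linarith)
    exact ⟨A, hA.le⟩
  refine ⟨h, hhpos.ne', A, fun x hx => ?_⟩
  have hxb : |x| ≤ R' := hxR' x hx
  have hhx1 : |h * x| ≤ 1 := by
    rw [abs_mul, abs_of_pos hhpos]
    calc h * |x| ≤ h * R' := mul_le_mul_of_nonneg_left hxb hhpos.le
    _ ≤ 1 := hhR'
  set y : ℝ := h * x + 2 * Real.pi * A with hydef
  have hsin : Real.sin y = Real.sin (h * x) := by
    have := Real.sin_add_nat_mul_two_pi (h * x) A
    rw [hydef, show 2 * Real.pi * (A:ℝ) = (A:ℝ) * (2 * Real.pi) by ring]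
    exact this
  have hsplit : ρ y / h - x = (Real.sin (h * x) - h * x) / h + w y * Real.exp (-y) / h := by
    rw [hρ, hsin]
    field_simp
    ring
  have ht1 : |(Real.sin (h * x) - h * x) / h| ≤ ε / 2 := by
    rw [abs_div, abs_of_pos hhpos, div_le_iff₀ hhpos]
    have hb := sin_lin_aux (h * x) hhx1
    have heq : |h * x| ^ 3 = h ^ 3 * |x| ^ 3 := by
      rw [abs_mul, abs_of_pos hhpos, mul_pow]
    have hx3 : |x| ^ 3 ≤ R' ^ 3 := pow_le_pow_left₀ (abs_nonneg x) hxb 3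
    calc |Real.sin (h * x) - h * x| ≤ h ^ 3 * |x| ^ 3 := by rw [← heq]; exact hb
    _ ≤ h ^ 3 * R' ^ 3 := mul_le_mul_of_nonneg_left hx3 (by positivity)
    _ = (h ^ 2 * R' ^ 3) * h := by ring
    _ ≤ ε / 2 * h := mul_le_mul_of_nonneg_right hhsq hhpos.le
  have hexpy : Real.exp (-y) ≤ Real.exp 1 * Real.exp (-(2 * Real.pi)) ^ A := by
    have hsp : Real.exp (-y) = Real.exp (-(h * x)) * Real.exp ((A:ℝ) * (-(2 * Real.pi))) := by
      rw [← Real.exp_add, hydef]; ring_nf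
    rw [hsp, Real.exp_nat_mul]
    have h1 : Real.exp (-(h * x)) ≤ Real.exp 1 := by
      apply Real.exp_le_exp.mpr
      have := neg_abs_le (h * x)
      linarith [abs_le.mp hhx1]
    exact mul_le_mul_of_nonneg_right h1 (pow_nonneg (Real.exp_pos _).le A)
  have ht2 : |w y * Real.exp (-y) / h| ≤ ε / 2 := by
    rw [abs_div, abs_mul, abs_of_pos hhpos, abs_of_pos (Real.exp_pos (-y)),
      div_le_iff₀ hhpos]
    have hwy := hMM' y
    have hchain : Real.exp (-y) ≤ ε * h / (2 * M') := by
      calc Real.exp (-y) ≤ Real.exp 1 * Real.exp (-(2 * Real.pi)) ^ A := hexpy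
      _ ≤ Real.exp 1 * (ε * h / (2 * M' * Real.exp 1)) :=
          mul_le_mul_of_nonneg_left hA (Real.exp_pos 1).le
      _ = ε * h / (2 * M') := by
          rw [eq_div_iff (by positivity)]
          field_simp
    calc |w y| * Real.exp (-y) ≤ M' * (ε * h / (2 * M')) :=
          mul_le_mul hwy hchain (Real.exp_pos _).le hM'pos.le
    _ = ε / 2 * h := by field_simp
  calc |ρ y / h - x| ≤ |(Real.sin (h * x) - h * x) / h| + |w y * Real.exp (-y) / h| := by
        rw [hsplit]; exact abs_add_le _ _
  _ ≤ ε / 2 + ε / 2 := add_le_add ht1 ht2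
  _ = ε := by ring
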